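/- For every positive integer n, ∑_{k=1}^n gcd(k,n)/lcm(k,n) = (1/n)·∑_{d∣n} (J_2(d)/d)·H_{n/d}, where J_2(d) = ∑_{e∣d} e²μ(d/e) is the Jordan totient of order 2 and H_m is the m-th harmonic number. -/

import Mathlib

open Finset ArithmeticFunction

private lemma J2_sum (m : ℕ) (hm : 0 < m) :
    ∑ d ∈ m.divisors, (∑ e ∈ d.divisors, ((e : ℤ) ^ 2 * moebius (d / e))) = (m : ℤ) ^ 2 := by
  have := (ArithmeticFunction.sum_eq_iff_sum_smul_moebius_eq
    (f := fun d => ∑ e ∈ d.divisors, ((e : ℤ) ^ 2 * moebius (d / e)))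
    (g := fun n => (n : ℤ) ^ 2)).mpr ?_ m hm
  · exact this
  · intro n hn
    rw [Nat.sum_divisorsAntidiagonal' (f := fun a b => moebius a • ((b : ℤ) ^ 2))]
    apply Finset.sum_congr rfl
    intro e he
    rw [smul_eq_mul, mul_comm]

theorem gcd_div_lcm_sum_eq (n : ℕ) (hn : 0 < n) :
    ∑ k ∈ Finset.Icc 1 n, (Nat.gcd k n : ℝ) / Nat.lcm k n =
      (1 / (n : ℝ)) * ∑ d ∈ n.divisors,
        ((∑ e ∈ d.divisors, ((e : ℤ) ^ 2 * ArithmeticFunction.moebius (d / e)) : ℤ) : ℝ) / d *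
          ∑ j ∈ Finset.Icc 1 (n / d), (1 : ℝ) / j := by
  set J : ℕ → ℝ := fun d => ((∑ e ∈ d.divisors, ((e : ℤ) ^ 2 * moebius (d / e)) : ℤ) : ℝ) with hJ
  -- Step 1: rewrite each term as a sum over divisors
  have step1 : ∀ k ∈ Finset.Icc 1 n, (Nat.gcd k n : ℝ) / Nat.lcm k n =
      ∑ d ∈ n.divisors.filter (· ∣ k), J d / (k * n) := by
    intro k hk
    rw [Finset.mem_Icc] at hk
    have hk0 : 0 < k := hk.1
    have hg : 0 < Nat.gcd k n := Nat.gcd_pos_of_pos_left _ hk0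
    have hfilter : n.divisors.filter (· ∣ k) = (Nat.gcd k n).divisors := by
      ext d
      simp only [Finset.mem_filter, Nat.mem_divisors, Nat.dvd_gcd_iff]
      constructor
      · rintro ⟨⟨h1, h2⟩, h3⟩; exact ⟨⟨h3, h1⟩, hg.ne'⟩
      · rintro ⟨⟨h1, h2⟩, _⟩; exact ⟨⟨h2, hn.ne'⟩, h1⟩
    rw [hfilter, ← Finset.sum_div]
    have hsum : ∑ d ∈ (Nat.gcd k n).divisors, J d = ((Nat.gcd k n : ℝ)) ^ 2 := by
      rw [hJ, ← Int.cast_sum, J2_sum (Nat.gcd k n) hg]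
      push_cast
      ring
    rw [hsum]
    have hlcm : (Nat.lcm k n : ℝ) * Nat.gcd k n = (k : ℝ) * n := by
      rw [← Nat.cast_mul, ← Nat.cast_mul, mul_comm (Nat.lcm k n), Nat.gcd_mul_lcm]
    have hl : (0:ℝ) < Nat.lcm k n := by
      have := Nat.pos_of_ne_zero (Nat.lcm_ne_zero hk0.ne' hn.ne')
      exact_mod_cast this
    field_simp
    nlinarith [hlcm, hg, hl, (by exact_mod_cast hg : (0:ℝ) < Nat.gcd k n)]
  rw [Finset.sum_congr rfl step1]
  -- Step 2: swap sums
  have step2 : ∑ k ∈ Finset.Icc 1 n, ∑ d ∈ n.divisors.filter (· ∣ k), J d / (k * n)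
      = ∑ d ∈ n.divisors, ∑ k ∈ (Finset.Icc 1 n).filter (d ∣ ·), J d / (k * n) := by
    simp only [Finset.sum_filter]
    rw [Finset.sum_comm]
  rw [step2]
  -- Step 3: reindex inner sums
  rw [Finset.mul_sum]
  apply Finset.sum_congr rfl
  intro d hd
  rw [Nat.mem_divisors] at hd
  obtain ⟨hdn, _⟩ := hd
  have hd0 : 0 < d := Nat.pos_of_dvd_of_pos hdn hn
  have reidx : ∑ k ∈ (Finset.Icc 1 n).filter (d ∣ ·), J d / (k * n)
      = ∑ j ∈ Finset.Icc 1 (n / d), J d / ((d * j : ℕ) * n) := by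
    apply Finset.sum_nbij' (fun k => k / d) (fun j => d * j)
    · intro k hk
      simp only [Finset.mem_filter, Finset.mem_Icc] at hk
      obtain ⟨⟨hk1, hk2⟩, hdk⟩ := hk
      rw [Finset.mem_Icc]
      exact ⟨Nat.one_le_div_iff hd0 |>.mpr (Nat.le_of_dvd hk1 hdk), Nat.div_le_div_right hk2⟩
    · intro j hj
      rw [Finset.mem_Icc] at hj
      simp only [Finset.mem_filter, Finset.mem_Icc]
      refine ⟨⟨Nat.mul_pos hd0 hj.1, ?_⟩, Dvd.intro j rfl⟩
      calc d * j ≤ d * (n / d) := Nat.mul_le_mul_left d hj.2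
        _ = n := Nat.mul_div_cancel' hdn
    · intro k hk
      simp only [Finset.mem_filter] at hk
      exact Nat.mul_div_cancel' hk.2
    · intro j hj
      exact Nat.mul_div_cancel_left j hd0
    · intro k hk
      simp only [Finset.mem_filter] at hk
      rw [Nat.mul_div_cancel' hk.2]
  rw [reidx]
  rw [Finset.mul_sum, Finset.mul_sum]
  apply Finset.sum_congr rfl
  intro j hj
  rw [Finset.mem_Icc] at hj
  have hj0 : 0 < j := hj.1
  push_cast
  have : (d:ℝ) ≠ 0 := Nat.cast_ne_zero.mpr hd0.ne'
  have : (j:ℝ) ≠ 0 := Nat.cast_ne_zero.mpr hj0.ne'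
  have : (n:ℝ) ≠ 0 := Nat.cast_ne_zero.mpr hn.ne'
  field_simp
  rw [hJ]
  push_cast
  ring
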